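/- For every real number α there exists a nonzero real scalar c such that c • (C_∞ · A · exp(−α•B) · A) belongs to the set 𝒞 of applicable projections; that is, every member of the camera family C_{α'} := C_∞ · A · exp(−α•B) · A used for Maxwell's duality is (up to the scalar equivalence of projection matrices) an applicable projection. -/

import Mathlib

attribute [local instance] Matrix.linftyOpNormedRing Matrix.linftyOpNormedAlgebra Matrix.linftyOpNormedAddCommGroup Matrix.linftyOpNormedSpace


open Matrix

/-- The null-polarity matrix used in Cremona's method. -/
def Bmat : Matrix (Fin 4) (Fin 4) ℝ :=
  !![0, -1, 0, 0;
     1,  0, 0, 0;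
     0,  0, 0, -1;
     0,  0, 1, 0]

/-- Parallel projection along the z-axis, in homogeneous coordinates. -/
def Cinf : Matrix (Fin 3) (Fin 4) ℝ :=
  !![1, 0, 0, 0;
     0, 1, 0, 0;
     0, 0, 0, 1]

/-- The basic finite pinhole camera with focal distance `φ`. -/
noncomputable def Cfin (φ : ℝ) : Matrix (Fin 3) (Fin 4) ℝ :=
  !![1, 0, 0, 0;
     0, 1, 0, 0;
     0, 0, φ⁻¹, 0]

/-- The rigid-motion matrix with rotation block `R` and translation column `t`. -/
def Mblock (R : Matrix (Fin 3) (Fin 3) ℝ) (t : Fin 3 → ℝ) : Matrix (Fin 4) (Fin 4) ℝ :=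
  Matrix.reindex finSumFinEquiv finSumFinEquiv
    (Matrix.fromBlocks R (Matrix.replicateCol (Fin 1) t)
      (0 : Matrix (Fin 1) (Fin 3) ℝ) (1 : Matrix (Fin 1) (Fin 1) ℝ))

/-- The set `𝒞` of applicable projections: finite pinhole cameras and parallel
projections. -/
def applicableProjections : Set (Matrix (Fin 3) (Fin 4) ℝ) :=
  {C | (∃ φ : ℝ, φ ≠ 0 ∧ ∃ R ∈ Matrix.specialOrthogonalGroup (Fin 3) ℝ, ∃ t : Fin 3 → ℝ,
          C = Cfin φ * Mblock R t) ∨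
       (∃ ψ : ℝ, ψ ≠ 0 ∧ ∃ R ∈ Matrix.specialOrthogonalGroup (Fin 3) ℝ, ∃ t : Fin 3 → ℝ,
          C = !![1, 0, 0; 0, ψ, 0; 0, 0, 1] * Cinf * Mblock R t)}


/-- The duality used by Maxwell (swap of the 3rd and 4th coordinates). -/
def Amat : Matrix (Fin 4) (Fin 4) ℝ :=
  !![1, 0, 0, 0;
     0, 1, 0, 0;
     0, 0, 0, 1;
     0, 0, 1, 0]


lemma Bsq : Bmat * Bmat = -1 := by
  ext i j
  fin_cases i <;> fin_cases j <;>
    simp [Bmat, Matrix.mul_apply, Fin.sum_univ_four, Matrix.one_apply, Matrix.vecHead, Matrix.vecTail]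

noncomputable def fC : ℂ →ₐ[ℝ] Matrix (Fin 4) (Fin 4) ℝ := Complex.liftAux Bmat Bsq

lemma exp_neg_smul (α : ℝ) :
    NormedSpace.exp ((-α) • Bmat) =
      Real.cos α • (1 : Matrix (Fin 4) (Fin 4) ℝ) + (-Real.sin α) • Bmat := by
  have hB : (-α) • Bmat = fC ((-α : ℝ) • Complex.I) := by
    simp [fC, Complex.liftAux_apply]
  rw [hB, show NormedSpace.exp (fC ((-α : ℝ) • Complex.I)) = fC (NormedSpace.exp ((-α : ℝ) • Complex.I)) from
    (NormedSpace.map_exp fC (LinearMap.continuous_of_finiteDimensional fC.toLinearMap) _).symm]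
  have : NormedSpace.exp ((-α : ℝ) • Complex.I) = Complex.exp ((-α : ℝ) * Complex.I) := by
    rw [Complex.exp_eq_exp_ℂ]
    norm_num [smul_eq_mul]
  rw [this, fC, Complex.liftAux_apply, Complex.exp_ofReal_mul_I_re,
    Complex.exp_ofReal_mul_I_im, Real.cos_neg, Real.sin_neg,
    Algebra.algebraMap_eq_smul_one]

lemma Mblock_eq (R : Matrix (Fin 3) (Fin 3) ℝ) (t : Fin 3 → ℝ) :
    Mblock R t = !![R 0 0, R 0 1, R 0 2, t 0;
                    R 1 0, R 1 1, R 1 2, t 1;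
                    R 2 0, R 2 1, R 2 2, t 2;
                    0, 0, 0, 1] := by
  ext i j
  fin_cases i <;> fin_cases j <;>
    simp [Mblock, Matrix.fromBlocks, finSumFinEquiv, Fin.addCases, Matrix.one_apply,
      Matrix.replicateCol] <;> rfl

lemma camera_eq (α : ℝ) :
    Cinf * Amat * NormedSpace.exp ((-α) • Bmat) * Amat =
      !![Real.cos α, Real.sin α, 0, 0;
         -Real.sin α, Real.cos α, 0, 0;
         0, 0, Real.sin α, Real.cos α] := by
  rw [exp_neg_smul]
  ext i j
  fin_cases i <;> fin_cases j <;>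
    simp [Cinf, Amat, Bmat, Matrix.mul_apply, Fin.sum_univ_four, Matrix.one_apply,
      Matrix.vecHead, Matrix.vecTail, Matrix.vecMul, dotProduct, Matrix.add_apply,
      Matrix.smul_apply]


/-- For every real `α` there is a nonzero scalar `c` such that
`c • (C∞ * A * exp (-α • B) * A)` is an applicable projection: every member of
the camera family `C_{α'} := C∞ * A * exp (-α • B) * A` used for Maxwell's
duality is, up to scalar equivalence, in `𝒞`. -/
theorem maxwell_camera_family_applicable (α : ℝ) :
    ∃ c : ℝ, c ≠ 0 ∧
      c • (Cinf * Amat * NormedSpace.exp ((-α) • Bmat) * Amat) ∈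
        applicableProjections := by
  have hpyth := Real.sin_sq_add_cos_sq α
  by_cases hs : Real.sin α = 0
  · have hc2 : Real.cos α * Real.cos α = 1 := by nlinarith
    have hc : Real.cos α ≠ 0 := by
      intro h; rw [h] at hc2; norm_num at hc2
    refine ⟨Real.cos α, hc, Or.inr ⟨1, one_ne_zero, 1, one_mem _, 0, ?_⟩⟩
    rw [camera_eq, hs, Mblock_eq]
    ext i j
    fin_cases i <;> fin_cases j <;>
      simp [Cinf, Matrix.mul_apply, Fin.sum_univ_four, Fin.sum_univ_three,
        Matrix.one_apply, Matrix.vecHead, Matrix.vecTail, hc2]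
  · set R : Matrix (Fin 3) (Fin 3) ℝ :=
      !![Real.cos α, Real.sin α, 0; -Real.sin α, Real.cos α, 0; 0, 0, 1] with hR
    have hRmem : R ∈ Matrix.specialOrthogonalGroup (Fin 3) ℝ := by
      rw [Matrix.mem_specialOrthogonalGroup_iff]
      constructor
      · rw [Matrix.mem_orthogonalGroup_iff]
        ext i j
        fin_cases i <;> fin_cases j <;>
          simp [hR, Matrix.mul_apply, Fin.sum_univ_three, Matrix.one_apply,
            Matrix.conjTranspose_apply, Matrix.vecHead, Matrix.vecTail] <;> nlinarith
      · rw [Matrix.det_fin_three]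
        simp [hR, Matrix.vecHead, Matrix.vecTail]
        nlinarith
    refine ⟨1, one_ne_zero, Or.inl ⟨(Real.sin α)⁻¹, inv_ne_zero hs, R, hRmem,
      ![0, 0, Real.cos α * (Real.sin α)⁻¹], ?_⟩⟩
    rw [one_smul, camera_eq, Mblock_eq]
    ext i j
    fin_cases i <;> fin_cases j <;>
      simp [Cfin, hR, Matrix.mul_apply, Fin.sum_univ_four, Matrix.vecHead,
        Matrix.vecTail, inv_inv] <;> field_simp
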